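/- Let X = diag(1, −1, −1) ∈ ℝ^{3×3}, v = (1, β, γ)ᵀ with 0 < β² + γ² < 1, and p(x) = x³. Then for every real symmetric 3×3 matrix H satisfying HX² + XHX + X²H applied to v equals zero, one has ⟨p''(X)[H]v, v⟩ ≥ 0, where p''(X)[H] = 2(H²X + HXH + XH²). -/

import Mathlib

open Matrix
set_option maxHeartbeats 1000000 in

theorem stmt10 (β γ : ℝ) (h1 : 0 < β ^ 2 + γ ^ 2) (h2 : β ^ 2 + γ ^ 2 < 1)
    (H : Matrix (Fin 3) (Fin 3) ℝ) (hH : H.IsSymm) :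
    ∀ (X : Matrix (Fin 3) (Fin 3) ℝ) (v : Fin 3 → ℝ),
      X = Matrix.diagonal ![1, -1, -1] → v = ![1, β, γ] →
      (H * X ^ 2 + X * H * X + X ^ 2 * H) *ᵥ v = 0 →
      0 ≤ (((2 : ℝ) • (H ^ 2 * X + H * X * H + X * H ^ 2)) *ᵥ v) ⬝ᵥ v := by
  intro X v hX hv hc
  subst hX hv
  have s10 : H 1 0 = H 0 1 := by have := congrFun (congrFun hH 0) 1; simpa [Matrix.transpose_apply] using this
  have s20 : H 2 0 = H 0 2 := by have := congrFun (congrFun hH 0) 2; simpa [Matrix.transpose_apply] using this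
  have s21 : H 2 1 = H 1 2 := by have := congrFun (congrFun hH 1) 2; simpa [Matrix.transpose_apply] using this
  have e0 := congrFun hc 0
  have e1 := congrFun hc 1
  have e2 := congrFun hc 2
  simp [Matrix.mulVec, Matrix.mul_apply, dotProduct, Fin.sum_univ_three, pow_two,
    Matrix.diagonal_apply] at e0 e1 e2 ⊢
  set a := H 0 0; set b := H 0 1; set c := H 0 2
  set d := H 1 1; set e := H 1 2; set f := H 2 2
  simp only [s10, s20, s21] at e0 e1 e2 ⊢
  have q0 : (a+b*β+c*γ)*(a+a+a+b*β+c*γ) = 0 := by rw [e0]; ring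
  have q1 : (b+d*β+e*γ)*(b+(d+d+d)*β+(e+e+e)*γ) = 0 := by rw [e1]; ring
  have q2 : (c+e*β+f*γ)*(c+(e+e+e)*β+(f+f+f)*γ) = 0 := by rw [e2]; ring
  have hw0 : a+b*β+c*γ = β*(b+d*β+e*γ) + γ*(c+e*β+f*γ) := by
    linear_combination (1/3)*e0 - (β/3)*e1 - (γ/3)*e2
  have hsq : (a+b*β+c*γ)^2 = (β*(b+d*β+e*γ)+γ*(c+e*β+f*γ))^2 := by rw [hw0]
  nlinarith [q0, q1, q2, hsq, sq_nonneg (γ*(b+d*β+e*γ) - β*(c+e*β+f*γ)),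
    mul_nonneg (sub_nonneg.2 h2.le) (add_nonneg (sq_nonneg (b+d*β+e*γ)) (sq_nonneg (c+e*β+f*γ)))]
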